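/- For real a with a > 2, D_{2n}(a)·((a−1)/a²)^n → (a−2)/(a−1) as n → ∞. -/

import Mathlib

open Filter Finset

lemma key_term (n ℓ : ℕ) (hl : ℓ ≤ n) :
    ((2 * ℓ + 1 : ℝ) / (n + ℓ + 1)) * (Nat.choose (2 * n) (n + ℓ) : ℝ)
      = (Nat.choose (2 * n) (n + ℓ) : ℝ) - (Nat.choose (2 * n) (n + ℓ + 1) : ℝ) := by
  have h := Nat.choose_succ_right_eq (2 * n) (n + ℓ)
  have h2 : 2 * n - (n + ℓ) = n - ℓ := by omega
  rw [h2] at h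
  have hcast : ((Nat.choose (2*n) (n+ℓ+1) : ℝ)) * ((n:ℝ) + ℓ + 1)
      = (Nat.choose (2*n) (n+ℓ) : ℝ) * ((n:ℝ) - ℓ) := by
    have := congrArg (Nat.cast : ℕ → ℝ) h
    push_cast [Nat.cast_sub hl] at this
    linarith [this]
  have hpos : (0:ℝ) < (n:ℝ) + ℓ + 1 := by positivity
  field_simp
  nlinarith [hcast]

/-- The adsorbing Dyck path partition function `D_{2n}(a)` for real `a`. -/
noncomputable def dyckPF (n : ℕ) (a : ℝ) : ℝ :=
  ∑ ℓ ∈ Finset.range (n + 1),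
    ((2 * ℓ + 1 : ℝ) / (n + ℓ + 1)) * (Nat.choose (2 * n) (n + ℓ) : ℝ) * (a - 1) ^ ℓ

theorem dyckPF_asymptotics_adsorbed (a : ℝ) (ha : 2 < a) :
    Tendsto (fun n : ℕ => dyckPF n a * ((a - 1) / a ^ 2) ^ n) atTop
      (nhds ((a - 2) / (a - 1))) := by
  have hb1 : (1:ℝ) < a - 1 := by linarith
  have hb0 : (0:ℝ) < a - 1 := by linarith
  have ha0 : (0:ℝ) < a := by linarith
  have hbne : (a - 1) ≠ 0 := ne_of_gt hb0
  have hane : (a:ℝ) ≠ 0 := ne_of_gt ha0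
  set b : ℝ := a - 1 with hbdef
  set S : ℕ → ℝ := fun n => ∑ ℓ ∈ Finset.range (n+1), (Nat.choose (2*n) (n+ℓ) : ℝ) * b ^ ℓ with hS
  set E : ℕ → ℝ := fun n => ∑ k ∈ Finset.range n, (Nat.choose (2*n) k : ℝ) * b ^ k with hE
  -- identity: dyckPF n a = S n - (S n - choose (2n) n) / b
  have hid : ∀ n : ℕ, dyckPF n a = S n - (S n - (Nat.choose (2*n) n : ℝ)) / b := by
    intro n
    have h1 : dyckPF n a = ∑ ℓ ∈ Finset.range (n+1),
        ((Nat.choose (2*n) (n+ℓ) : ℝ) - (Nat.choose (2*n) (n+ℓ+1) : ℝ)) * b ^ ℓ := by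
      unfold dyckPF
      refine Finset.sum_congr rfl fun ℓ hℓ => ?_
      rw [key_term n ℓ (by simpa using Nat.lt_succ_iff.mp (Finset.mem_range.mp hℓ))]
    have hshift : ∑ ℓ ∈ Finset.range (n+1), (Nat.choose (2*n) (n+ℓ+1) : ℝ) * b ^ (ℓ+1)
        = S n - (Nat.choose (2*n) n : ℝ) := by
      have hzero : (Nat.choose (2*n) (n+(n+1)) : ℝ) * b ^ (n+1) = 0 := by
        rw [Nat.choose_eq_zero_of_lt (by omega)]; simp
      have h1' := Finset.sum_range_succ' (fun m => (Nat.choose (2*n) (n+m) : ℝ) * b ^ m) (n+1)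
      have h2' := Finset.sum_range_succ (fun m => (Nat.choose (2*n) (n+m) : ℝ) * b ^ m) (n+1)
      rw [h2', hzero] at h1'
      simp only [hS]
      simp only [add_zero] at h1'
      -- h1' : S n = ∑ ℓ ∈ range (n+1), choose (2n) (n+(ℓ+1)) * b^(ℓ+1) + choose (2n) (n+0) * b^0
      have : ∑ ℓ ∈ Finset.range (n+1), (Nat.choose (2*n) (n+ℓ+1) : ℝ) * b ^ (ℓ+1)
          = ∑ ℓ ∈ Finset.range (n+1), (Nat.choose (2*n) (n+(ℓ+1)) : ℝ) * b ^ (ℓ+1) := by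
        refine Finset.sum_congr rfl fun ℓ _ => by rw [add_assoc]
      rw [this]
      simp at h1'
      linarith [h1']
    rw [h1]
    have : ∑ ℓ ∈ Finset.range (n+1),
        ((Nat.choose (2*n) (n+ℓ) : ℝ) - (Nat.choose (2*n) (n+ℓ+1) : ℝ)) * b ^ ℓ
        = S n - (∑ ℓ ∈ Finset.range (n+1), (Nat.choose (2*n) (n+ℓ+1) : ℝ) * b ^ (ℓ+1)) / b := by
      rw [Finset.sum_div, ← Finset.sum_sub_distrib]
      refine Finset.sum_congr rfl fun ℓ _ => ?_
      field_simp
      ring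
    rw [this, hshift]
  -- binomial split
  have hsplit : ∀ n : ℕ, (a^2)^n = E n + b^n * S n := by
    intro n
    have hab : a = b + 1 := by rw [hbdef]; ring
    have hbin : (b + 1)^(2*n) = ∑ k ∈ Finset.range (2*n+1), b^k * (Nat.choose (2*n) k : ℝ) := by
      have := add_pow b 1 (2*n)
      simpa using this
    have hsplit2 : ∑ k ∈ Finset.range (n + (n+1)), b^k * (Nat.choose (2*n) k : ℝ)
        = (∑ k ∈ Finset.range n, b^k * (Nat.choose (2*n) k : ℝ))
          + ∑ k ∈ Finset.range (n+1), b^(n+k) * (Nat.choose (2*n) (n+k) : ℝ) :=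
      Finset.sum_range_add _ n (n+1)
    have h2n : 2*n+1 = n + (n+1) := by omega
    have h1 : (a^2)^n = ∑ k ∈ Finset.range (2*n+1), b^k * (Nat.choose (2*n) k : ℝ) := by
      rw [← hbin, hab, ← pow_mul]
    rw [h1, h2n, hsplit2, hE, hS]
    rw [Finset.mul_sum]
    congr 1
    · exact Finset.sum_congr rfl fun k _ => by ring
    · exact Finset.sum_congr rfl fun k _ => by rw [pow_add]; ring
  set r : ℝ := b / a^2 with hrdef
  have ha2 : (0:ℝ) < a^2 := by positivity
  have hr0 : 0 ≤ r := by positivity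
  set q : ℝ := 4 * b / a^2 with hqdef
  have hq0 : 0 ≤ q := by positivity
  have hq1 : q < 1 := by
    rw [hqdef, div_lt_one ha2]
    nlinarith [sq_nonneg (a - 2)]
  have hqten : Tendsto (fun n : ℕ => q ^ n) atTop (nhds 0) :=
    tendsto_pow_atTop_nhds_zero_of_lt_one hq0 hq1
  -- E bounds
  have hE_nonneg : ∀ n, 0 ≤ E n := fun n =>
    Finset.sum_nonneg fun k _ => by positivity
  have hE_le : ∀ n, E n ≤ (4*b)^n := by
    intro n
    calc E n ≤ ∑ k ∈ Finset.range n, (Nat.choose (2*n) k : ℝ) * b ^ n := by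
          refine Finset.sum_le_sum fun k hk => ?_
          have : b ^ k ≤ b ^ n := pow_le_pow_right₀ hb1.le (le_of_lt (Finset.mem_range.mp hk))
          exact mul_le_mul_of_nonneg_left this (by positivity)
      _ = (∑ k ∈ Finset.range n, (Nat.choose (2*n) k : ℝ)) * b ^ n := by
          rw [Finset.sum_mul]
      _ ≤ (4:ℝ)^n * b ^ n := by
          refine mul_le_mul_of_nonneg_right ?_ (by positivity)
          have hnat : ∑ k ∈ Finset.range n, Nat.choose (2*n) k ≤ 2^(2*n) := by
            calc ∑ k ∈ Finset.range n, Nat.choose (2*n) k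
                ≤ ∑ k ∈ Finset.range (2*n+1), Nat.choose (2*n) k :=
                  Finset.sum_le_sum_of_subset (Finset.range_subset_range.mpr (by omega))
              _ = 2^(2*n) := Nat.sum_range_choose (2*n)
          calc (∑ k ∈ Finset.range n, (Nat.choose (2*n) k : ℝ))
              = ((∑ k ∈ Finset.range n, Nat.choose (2*n) k : ℕ) : ℝ) := by push_cast; ring
            _ ≤ ((2^(2*n) : ℕ) : ℝ) := by exact_mod_cast hnat
            _ = (4:ℝ)^n := by push_cast; rw [pow_mul]; norm_num
      _ = (4*b)^n := by rw [mul_pow]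
  -- S n * r^n = 1 - E n / (a^2)^n
  have hSrn : ∀ n, S n * r ^ n = 1 - E n / (a^2)^n := by
    intro n
    have h := hsplit n
    have ha2n : (a^2)^n ≠ 0 := by positivity
    rw [hrdef, div_pow]
    field_simp
    linarith [h]
  -- limits
  have hEten : Tendsto (fun n => E n / (a^2)^n) atTop (nhds 0) := by
    refine squeeze_zero (fun n => by positivity) (fun n => ?_) hqten
    rw [hqdef, div_pow, div_le_div_iff₀ (by positivity) (by positivity)]
    calc E n * (a^2)^n ≤ (4*b)^n * (a^2)^n :=
          mul_le_mul_of_nonneg_right (hE_le n) (by positivity)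
      _ = (4*b)^n * (a^2)^n := rfl
  have hg : Tendsto (fun n => S n * r ^ n) atTop (nhds 1) := by
    have : Tendsto (fun n => 1 - E n / (a^2)^n) atTop (nhds (1 - 0)) :=
      tendsto_const_nhds.sub hEten
    rw [sub_zero] at this
    exact this.congr fun n => (hSrn n).symm
  -- central binomial
  have hC : Tendsto (fun n => (Nat.choose (2*n) n : ℝ) * r ^ n) atTop (nhds 0) := by
    refine squeeze_zero (fun n => by positivity) (fun n => ?_) hqten
    have hcb : (Nat.choose (2*n) n : ℝ) ≤ 4^n := by
      have hnat : Nat.choose (2*n) n ≤ 2^(2*n) := by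
        calc Nat.choose (2*n) n ≤ ∑ k ∈ Finset.range (2*n+1), Nat.choose (2*n) k :=
              Finset.single_le_sum (fun k _ => Nat.zero_le _) (Finset.mem_range.mpr (by omega))
          _ = 2^(2*n) := Nat.sum_range_choose (2*n)
      calc (Nat.choose (2*n) n : ℝ) ≤ ((2^(2*n) : ℕ) : ℝ) := by exact_mod_cast hnat
        _ = (4:ℝ)^n := by push_cast; rw [pow_mul]; norm_num
    calc (Nat.choose (2*n) n : ℝ) * r ^ n ≤ 4^n * r^n :=
          mul_le_mul_of_nonneg_right hcb (by positivity)
      _ = q ^ n := by rw [hqdef, hrdef, ← mul_pow]; ring_nf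
  -- combine
  have hmain : Tendsto (fun n => S n * r ^ n - (S n * r ^ n - (Nat.choose (2*n) n : ℝ) * r ^ n) / b)
      atTop (nhds (1 - (1 - 0) / b)) :=
    hg.sub ((hg.sub hC).div_const b)
  have heq : (1 : ℝ) - (1 - 0) / b = (a - 2) / (a - 1) := by
    rw [hbdef, sub_zero, eq_div_iff (ne_of_gt (by linarith : (0:ℝ) < a - 1)), sub_mul, one_div, inv_mul_cancel₀ (ne_of_gt (by linarith : (0:ℝ) < a - 1))]; ring
  rw [heq] at hmain
  refine hmain.congr fun n => ?_
  rw [hid n]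
  field_simp
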